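/- Let A = (α_0,...,α_{n-1}) with α_i ∈ (0,π). If there exists a closed polygon P ⊂ R³ realizing A (turning angle at v_i equals α_i), then there exists a spherical polygon P' = (u_0,...,u_{n-1}) in S² whose i-th side has spherical length α_i for each i, and moreover 0 ∈ relint(conv(P')). -/

import Mathlib

open Real
open scoped RealInnerProductSpace

/-- The spherical (geodesic) distance between unit vectors. -/
noncomputable def sdist (u v : EuclideanSpace ℝ (Fin 3)) : ℝ :=
  Real.arccos ⟪u, v⟫

section Aux

variable {E : Type*} [NormedAddCommGroup E] [NormedSpace ℝ E] [FiniteDimensional ℝ E]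
variable {ι : Type*} [Fintype ι]

/-- Full-span case: a strictly positive convex combination equal to `0` forces
`0` to lie in the topological interior of the convex hull. -/
lemma zero_mem_interior_convexHull (u : ι → E) (w : ι → ℝ)
    (hw : ∀ i, 0 < w i) (hsum : ∑ i, w i = 1) (hzero : ∑ i, w i • u i = 0)
    (hspan : Submodule.span ℝ (Set.range u) = ⊤) :
    (0 : E) ∈ interior (convexHull ℝ (Set.range u)) := by
  classical
  let f : (ι → ℝ) →ₗ[ℝ] E :=
    { toFun := fun c => ∑ i, c i • u i
      map_add' := by intro a b; simp [add_smul, Finset.sum_add_distrib]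
      map_smul' := by intro r a; simp [smul_smul, Finset.smul_sum] }
  have hfsurj : Function.Surjective f := by
    intro x
    have hx : x ∈ Submodule.span ℝ (Set.range u) := by rw [hspan]; trivial
    obtain ⟨c, hc⟩ := (Submodule.mem_span_range_iff_exists_fun ℝ).1 hx
    exact ⟨c, hc⟩
  have hopen : IsOpenMap f := by
    have := ContinuousLinearMap.isOpenMap (LinearMap.toContinuousLinearMap f) (by
      simpa using hfsurj)
    simpa using this
  set U : Set (ι → ℝ) := (Set.univ.pi fun _ => Set.Ioi (0 : ℝ)) ∩ {c | ∑ i, c i < 1} with hU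
  have hUopen : IsOpen U :=
    (isOpen_set_pi Set.finite_univ fun i _ => isOpen_Ioi).inter
      (isOpen_lt (by fun_prop) continuous_const)
  have hconv : Convex ℝ (convexHull ℝ (Set.range u)) := convex_convexHull _ _
  have h0mem : (0 : E) ∈ convexHull ℝ (Set.range u) := by
    rw [← hzero]
    exact hconv.sum_mem (fun i _ => (hw i).le) hsum
      (fun i _ => subset_convexHull ℝ _ (Set.mem_range_self i))
  have hsub : f '' U ⊆ convexHull ℝ (Set.range u) := by
    rintro x ⟨c, ⟨hcpos, hcsum⟩, rfl⟩
    have hcpos' : ∀ i, 0 < c i := fun i => hcpos i (Set.mem_univ i)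
    have hcsum' : ∑ i, c i < 1 := hcsum
    have key := hconv.sum_mem (t := (Finset.univ : Finset (Option ι)))
      (w := fun o => Option.elim o (1 - ∑ i, c i) c)
      (z := fun o => Option.elim o 0 u)
      (fun o _ => by
        cases o with
        | none => simpa using (sub_nonneg.2 hcsum'.le)
        | some i => exact (hcpos' i).le)
      (by simp [Fintype.sum_option])
      (fun o _ => by
        cases o with
        | none => exact h0mem
        | some i => exact subset_convexHull ℝ _ (Set.mem_range_self i))
    have : ∑ o : Option ι, (Option.elim o (1 - ∑ i, c i) c) • (Option.elim o 0 u) = f c := by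
      simp [Fintype.sum_option, f]
    rwa [this] at key
  have h0img : (0 : E) ∈ f '' U := by
    refine ⟨fun i => w i / 2, ⟨fun i _ => by
      simpa using half_pos (hw i), ?_⟩, ?_⟩
    · show (∑ i, w i / 2) < 1
      rw [← Finset.sum_div, hsum]
      norm_num
    · show ∑ i, (w i / 2) • u i = 0
      have : ∑ i, (w i / 2) • u i = (2⁻¹ : ℝ) • ∑ i, w i • u i := by
        rw [Finset.smul_sum]
        congr 1; ext i; rw [smul_smul]; ring_nf
      rw [this, hzero, smul_zero]
  exact mem_interior.2 ⟨f '' U, hsub, hopen U hUopen, h0img⟩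

/-- General case: a strictly positive convex combination equal to `0` forces `0`
to lie in the intrinsic interior of the convex hull. -/
lemma zero_mem_intrinsicInterior_convexHull (u : ι → E) (w : ι → ℝ)
    (hw : ∀ i, 0 < w i) (hsum : ∑ i, w i = 1) (hzero : ∑ i, w i • u i = 0) :
    (0 : E) ∈ intrinsicInterior ℝ (convexHull ℝ (Set.range u)) := by
  classical
  set V : Submodule ℝ E := Submodule.span ℝ (Set.range u) with hV
  let u' : ι → V := fun i => ⟨u i, Submodule.subset_span (Set.mem_range_self i)⟩
  let φ : V →ᵃⁱ[ℝ] E := V.subtypeₗᵢ.toAffineIsometry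
  have hφ : ⇑φ = (V.subtype : V →ₗ[ℝ] E) := rfl
  have hrange : Set.range u = ⇑φ '' Set.range u' := by
    rw [← Set.range_comp]
    rfl
  have hspan' : Submodule.span ℝ (Set.range u') = (⊤ : Submodule ℝ V) := by
    apply Submodule.map_injective_of_injective (f := V.subtype) Subtype.coe_injective
    rw [Submodule.map_span, Submodule.map_subtype_top]
    have : ⇑V.subtype '' Set.range u' = Set.range u := by
      rw [← Set.range_comp]; rfl
    rw [this, hV]
  have hzero' : ∑ i, w i • u' i = (0 : V) := by
    apply Subtype.coe_injective
    push_cast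
    simpa using hzero
  have hint : (0 : V) ∈ interior (convexHull ℝ (Set.range u')) :=
    zero_mem_interior_convexHull u' w hw hsum hzero' hspan'
  have hint2 : (0 : V) ∈ intrinsicInterior ℝ (convexHull ℝ (Set.range u')) :=
    interior_subset_intrinsicInterior hint
  have himg : convexHull ℝ (Set.range u) = ⇑φ '' convexHull ℝ (Set.range u') := by
    rw [hrange, hφ, ← V.subtype.image_convexHull]
  rw [himg, AffineIsometry.image_intrinsicInterior]
  exact ⟨0, hint2, by simp [hφ]⟩

end Aux

/-- If a closed polygon in `ℝ³` realizes the angle sequence `α ∈ (0,π)^n` (the turning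
angle at vertex `i` is `α i`), then there is a spherical polygon `u 0, …, u (n-1)` on the
unit sphere whose `i`-th side has spherical length `α i`, and moreover the origin lies in
the relative interior of its convex hull. -/
theorem spherical_polygon_of_polygon {n : ℕ} [NeZero n] (hn : 3 ≤ n)
    (v : Fin n → EuclideanSpace ℝ (Fin 3))
    (hnd : ∀ i : Fin n, v (i + 1) ≠ v i)
    (α : Fin n → ℝ) (hα : ∀ i : Fin n, α i ∈ Set.Ioo 0 π)
    (hreal : ∀ i : Fin n,
      InnerProductGeometry.angle (v i - v (i - 1)) (v (i + 1) - v i) = α i) :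
    ∃ u : Fin n → EuclideanSpace ℝ (Fin 3),
      (∀ i : Fin n, ‖u i‖ = 1) ∧
      (∀ i : Fin n, sdist (u (i - 1)) (u i) = α i) ∧
      (0 : EuclideanSpace ℝ (Fin 3)) ∈ intrinsicInterior ℝ (convexHull ℝ (Set.range u)) := by
  classical
  set e : Fin n → EuclideanSpace ℝ (Fin 3) := fun i => v (i + 1) - v i with he
  have hene : ∀ i, e i ≠ 0 := fun i => sub_ne_zero.2 (hnd i)
  have henorm : ∀ i, (0 : ℝ) < ‖e i‖ := fun i => norm_pos_iff.2 (hene i)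
  set u : Fin n → EuclideanSpace ℝ (Fin 3) := fun i => ‖e i‖⁻¹ • e i with hu
  have hunorm : ∀ i, ‖u i‖ = 1 := by
    intro i
    rw [hu]
    simp only [norm_smul, norm_inv, norm_norm]
    exact inv_mul_cancel₀ (henorm i).ne'
  refine ⟨u, hunorm, ?_, ?_⟩
  · intro i
    have hsub : (i - 1 : Fin n) + 1 = i := by simp
    have : sdist (u (i - 1)) (u i)
        = InnerProductGeometry.angle (e (i - 1)) (e i) := by
      rw [sdist, InnerProductGeometry.angle, hu]
      simp only [real_inner_smul_left, real_inner_smul_right]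
      congr 1
      field_simp
    rw [this, he]
    simp only [hsub]
    exact hreal i
  · -- closing condition
    have hclosed : ∑ i, e i = 0 := by
      rw [he]
      have h1 : ∑ i : Fin n, v (i + 1) = ∑ i : Fin n, v i :=
        Equiv.sum_comp (Equiv.addRight (1 : Fin n)) v
      simp [Finset.sum_sub_distrib, h1]
    set L : ℝ := ∑ i, ‖e i‖ with hL
    have hLpos : 0 < L := by
      rw [hL]
      have : (0:Fin n) ∈ (Finset.univ : Finset (Fin n)) := Finset.mem_univ _
      exact Finset.sum_pos (fun i _ => henorm i) ⟨0, this⟩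
    set w : Fin n → ℝ := fun i => ‖e i‖ / L with hw
    have hwpos : ∀ i, 0 < w i := fun i => div_pos (henorm i) hLpos
    have hwsum : ∑ i, w i = 1 := by
      rw [hw]
      rw [← Finset.sum_div, ← hL, div_self hLpos.ne']
    have hwzero : ∑ i, w i • u i = 0 := by
      have h1 : ∀ i, w i • u i = L⁻¹ • e i := by
        intro i
        rw [hw, hu, smul_smul]
        congr 1
        rw [div_mul_eq_mul_div, mul_inv_cancel₀ (henorm i).ne', one_div]
      simp only [h1, ← Finset.smul_sum, hclosed, smul_zero]
    exact zero_mem_intrinsicInterior_convexHull u w hwpos hwsum hwzero
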